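/- In the Set Cover reduction graph (with the isolated target t connected by edges to a subset A of X-nodes), the 2-hop neighborhood of t satisfies N²_{G'}(t) = {x_i : S_i ∈ A} ∪ {y_j : u_j ∈ ∪_{S_i ∈ A} S_i}, hence |N²_{G'}(t)| = |A| + |∪_{S_i ∈ A} S_i| ≤ |A| + |U|, with equality in the second term iff A covers U. -/
import Mathlib

/-- The 2-hop neighborhood of `t`: nodes other than `t` at shortest-path distance ≤ 2. -/
def twoHop {V : Type*} (G : SimpleGraph V) (t : V) : Set V :=
  {v | v ≠ t ∧ (G.Adj t v ∨ ∃ w, G.Adj t w ∧ G.Adj w v)}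

/-- The Set-Cover reduction graph: bipartite graph between subset-nodes `x_i` and
element-nodes `y_j` with an edge iff `u_j ∈ S_i`, plus an extra target node `t = none`
joined to the subset-nodes indexed by `A`. -/
def redGraph {n m : ℕ} (S : Fin m → Finset (Fin n)) (A : Finset (Fin m)) :
    SimpleGraph (Option (Fin m ⊕ Fin n)) :=
  SimpleGraph.fromRel (fun a b =>
    (∃ i j, a = some (Sum.inl i) ∧ b = some (Sum.inr j) ∧ j ∈ S i) ∨
    (∃ i, a = none ∧ b = some (Sum.inl i) ∧ i ∈ A))

lemma adj_none {n m : ℕ} (S : Fin m → Finset (Fin n)) (A : Finset (Fin m)) (v) :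
    (redGraph S A).Adj none v ↔ ∃ i ∈ A, v = some (Sum.inl i) := by
  simp only [redGraph, SimpleGraph.fromRel_adj]
  aesop

lemma adj_inl {n m : ℕ} (S : Fin m → Finset (Fin n)) (A : Finset (Fin m)) (i v) :
    (redGraph S A).Adj (some (Sum.inl i)) v ↔
      (∃ j ∈ S i, v = some (Sum.inr j)) ∨ (v = none ∧ i ∈ A) := by
  simp only [redGraph, SimpleGraph.fromRel_adj]
  aesop

theorem stmt_16 (n m : ℕ) (S : Fin m → Finset (Fin n)) (A : Finset (Fin m)) :
    twoHop (redGraph S A) none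
      = (fun i => some (Sum.inl i)) '' (A : Set (Fin m)) ∪
        (fun j => some (Sum.inr j)) '' {j : Fin n | ∃ i ∈ A, j ∈ S i} ∧
    (twoHop (redGraph S A) none).ncard = A.card + (A.biUnion S).card ∧
    (twoHop (redGraph S A) none).ncard ≤ A.card + n ∧
    ((twoHop (redGraph S A) none).ncard = A.card + n ↔ ∀ u : Fin n, ∃ i ∈ A, u ∈ S i) := by
  have hset : twoHop (redGraph S A) none
      = (fun i => some (Sum.inl i)) '' (A : Set (Fin m)) ∪
        (fun j => some (Sum.inr j)) '' {j : Fin n | ∃ i ∈ A, j ∈ S i} := by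
    ext v
    simp only [twoHop, Set.mem_setOf_eq, Set.mem_union, Set.mem_image, Finset.mem_coe]
    constructor
    · rintro ⟨hv, h | ⟨w, hw, hwv⟩⟩
      · obtain ⟨i, hi, rfl⟩ := (adj_none S A v).1 h
        exact Or.inl ⟨i, hi, rfl⟩
      · obtain ⟨i, hi, rfl⟩ := (adj_none S A w).1 hw
        rcases (adj_inl S A i v).1 hwv with ⟨j, hj, rfl⟩ | ⟨rfl, _⟩
        · exact Or.inr ⟨j, ⟨i, hi, hj⟩, rfl⟩
        · exact absurd rfl hv
    · rintro (⟨i, hi, rfl⟩ | ⟨j, ⟨i, hi, hj⟩, rfl⟩)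
      · exact ⟨by simp, Or.inl ((adj_none S A _).2 ⟨i, hi, rfl⟩)⟩
      · exact ⟨by simp, Or.inr ⟨some (Sum.inl i), (adj_none S A _).2 ⟨i, hi, rfl⟩,
          (adj_inl S A i _).2 (Or.inl ⟨j, hj, rfl⟩)⟩⟩
  have hfin : twoHop (redGraph S A) none =
      ↑(A.image (fun i => (some (Sum.inl i) : Option (Fin m ⊕ Fin n))) ∪
        (A.biUnion S).image (fun j => some (Sum.inr j))) := by
    rw [hset]
    ext v; simp
  have hcard : (twoHop (redGraph S A) none).ncard = A.card + (A.biUnion S).card := by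
    rw [hfin, Set.ncard_coe_finset, Finset.card_union_of_disjoint, Finset.card_image_of_injective,
      Finset.card_image_of_injective]
    · intro a b h; simpa using h
    · intro a b h; simpa using h
    · simp [Finset.disjoint_left]
  have hle : (A.biUnion S).card ≤ n := by
    simpa using Finset.card_le_univ (A.biUnion S)
  refine ⟨hset, hcard, by omega, ?_⟩
  rw [hcard]
  have : (A.biUnion S).card = n ↔ A.biUnion S = Finset.univ := by
    constructor
    · intro h
      apply Finset.eq_univ_of_card
      simpa using h
    · intro h; simp [h]
  constructor
  · intro h
    have h2 : A.biUnion S = Finset.univ := this.1 (by omega)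
    intro u
    have := Finset.mem_univ u
    rw [← h2, Finset.mem_biUnion] at this
    exact this
  · intro h
    have : A.biUnion S = Finset.univ := by
      apply Finset.eq_univ_iff_forall.2
      intro u; rw [Finset.mem_biUnion]; exact h u
    rw [this]; simp
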